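/- For every integer n ≥ 1, Σ_{A ∈ 𝒜_n} 2^{N₊(A)} = 2^{n(n+1)/2}. -/

import Mathlib

/-- An alternating sign matrix of order `n`: entries in `{-1, 0, 1}`, every partial row
sum and partial column sum equals `0` or `1`, and every full row and column sums to `1`. -/
def IsASM {n : ℕ} (A : Matrix (Fin n) (Fin n) ℤ) : Prop :=
  (∀ i j, A i j = -1 ∨ A i j = 0 ∨ A i j = 1) ∧
  (∀ i m, (∑ x ∈ Finset.Iic m, A i x) = 0 ∨ (∑ x ∈ Finset.Iic m, A i x) = 1) ∧
  (∀ j m, (∑ x ∈ Finset.Iic m, A x j) = 0 ∨ (∑ x ∈ Finset.Iic m, A x j) = 1) ∧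
  (∀ i, (∑ x, A i x) = 1) ∧
  (∀ j, (∑ x, A x j) = 1)

/-- The number of entries of `A` equal to `+1`. -/
def Nplus {n : ℕ} (A : Matrix (Fin n) (Fin n) ℤ) : ℕ :=
  (Finset.univ.filter fun p : Fin n × Fin n => A p.1 p.2 = 1).card

/-- The number of entries of `A` equal to `−1`. -/
def Nminus {n : ℕ} (A : Matrix (Fin n) (Fin n) ℤ) : ℕ :=
  (Finset.univ.filter fun p : Fin n × Fin n => A p.1 p.2 = -1).card

open Finset Polynomial

noncomputable def qq (j : ℕ) : Polynomial ℚ :=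
  C ((1:ℚ)/(2*(j+1))) * ((X + C 2)^(j+1) - X^(j+1))

noncomputable def QQ (j : ℕ) : Polynomial ℚ :=
  C ((1:ℚ)/(4*(j+1))) * (X^(j+1) + 2*(X + C 1)^(j+1) + (X + C 2)^(j+1))

lemma qq_QQ_eval (j : ℕ) (x : ℚ) :
    (qq j).eval x + (qq j).eval (x+1) = 2 * ((QQ j).eval (x+1) - (QQ j).eval x) := by
  simp only [qq, QQ, eval_mul, eval_C, eval_add, eval_sub, eval_pow, eval_X, eval_ofNat,
    eval_one]
  have h1 : x + 1 + 1 = x + 2 := by ring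
  have h2 : x + 1 + 2 = x + 3 := by ring
  rw [h1, h2]
  have hj : ((j:ℚ)+1) ≠ 0 := by positivity
  field_simp
  ring

lemma qq_coeff_j (j : ℕ) : (qq j).coeff j = 1 := by
  simp only [qq, coeff_C_mul, coeff_sub, Polynomial.coeff_X_add_C_pow, Polynomial.coeff_X_pow]
  have : j + 1 - j = 1 := by omega
  rw [this]
  simp [Nat.choose_succ_self_right]
  have hj : ((j:ℚ)+1) ≠ 0 := by positivity
  field_simp

lemma coeff_top_aux (j l : ℕ) (h : j < l) (c : ℚ) : ((X + C c)^j).coeff l = 0 :=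
  Polynomial.coeff_eq_zero_of_natDegree_lt (by
    simpa [Polynomial.natDegree_X_add_C] using h)

lemma qq_natDegree_le (j : ℕ) : (qq j).natDegree ≤ j := by
  apply Polynomial.natDegree_le_iff_coeff_eq_zero.2
  intro l hl
  simp only [qq, coeff_C_mul, coeff_sub, Polynomial.coeff_X_pow]
  rcases eq_or_lt_of_le (Nat.succ_le_of_lt hl) with h | h
  · rw [← h]
    simp [Polynomial.coeff_X_add_C_pow]
  · rw [coeff_top_aux _ _ h]
    simp [Nat.ne_of_gt h]

lemma QQ_coeff_top (j : ℕ) : (QQ j).coeff (j+1) = 1/(j+1) := by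
  simp only [QQ, coeff_C_mul, coeff_add, Polynomial.coeff_X_pow, coeff_ofNat_mul,
    Polynomial.coeff_X_add_C_pow]
  norm_num
  have hj : ((j:ℚ)+1) ≠ 0 := by positivity
  field_simp

lemma QQ_natDegree_le (j : ℕ) : (QQ j).natDegree ≤ j + 1 := by
  apply Polynomial.natDegree_le_iff_coeff_eq_zero.2
  intro l hl
  simp only [QQ, coeff_C_mul, coeff_add, Polynomial.coeff_X_pow, coeff_ofNat_mul]
  rw [coeff_top_aux _ _ hl, coeff_top_aux _ _ hl]
  simp [Nat.ne_of_gt hl]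



lemma tele_nat (j a b : ℕ) (hab : a < b) :
    ∑ x ∈ Icc a b, (if x = a ∨ x = b then 1 else 2) * (qq j).eval (x:ℚ)
      = 2 * ((QQ j).eval (b:ℚ) - (QQ j).eval (a:ℚ)) := by
  induction b, hab using Nat.le_induction with
  | base =>
    have h1 : Icc a (a+1) = {a, a+1} := by
      ext x; simp [Finset.mem_Icc, Finset.mem_insert]; omega
    rw [h1, Finset.sum_insert (by simp)]
    simp only [Finset.sum_singleton]
    have := qq_QQ_eval j (a:ℚ)
    simp only [eq_self_iff_true, true_or, or_true, if_true]
    push_cast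
    linarith
  | succ b hb ih =>
    have h1 : Icc a (b+1) = insert (b+1) (Icc a b) := by
      ext x; simp [Finset.mem_Icc, Finset.mem_insert]; omega
    rw [h1, Finset.sum_insert (by simp)]
    have h2 : ∑ x ∈ Icc a b, (if x = a ∨ x = b + 1 then (1:ℚ) else 2) * (qq j).eval (x:ℚ)
        = (∑ x ∈ Icc a b, (if x = a ∨ x = b then (1:ℚ) else 2) * (qq j).eval (x:ℚ))
          + (qq j).eval (b:ℚ) := by
      have hbmem : b ∈ Icc a b := by simp [Finset.mem_Icc]; omega
      rw [← Finset.sum_erase_add _ _ hbmem, ← Finset.sum_erase_add _ _ hbmem]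
      have : ∀ x ∈ (Icc a b).erase b,
          (if x = a ∨ x = b + 1 then (1:ℚ) else 2) * (qq j).eval (x:ℚ)
          = (if x = a ∨ x = b then (1:ℚ) else 2) * (qq j).eval (x:ℚ) := by
        intro x hx
        simp only [Finset.mem_erase, Finset.mem_Icc] at hx
        have : (x = a ∨ x = b + 1) ↔ (x = a ∨ x = b) := by omega
        simp only [this]
      rw [Finset.sum_congr rfl this]
      have hba : ¬ (b = a) := by omega
      simp [hba]
      ring
    rw [h2, ih]
    have := qq_QQ_eval j (b:ℚ)
    simp only [eq_self_iff_true, true_or, or_true, if_true]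
    push_cast
    linarith



lemma tele_fin {n : ℕ} (j : ℕ) (a b : Fin n) (hab : a < b) :
    ∑ x ∈ Icc a b, (if x = a ∨ x = b then 1 else 2) * (qq j).eval ((x:ℕ):ℚ)
      = 2 * ((QQ j).eval ((b:ℕ):ℚ) - (QQ j).eval ((a:ℕ):ℚ)) := by
  rw [← tele_nat j a.val b.val hab]
  rw [← Fin.map_valEmbedding_Icc, Finset.sum_map]
  apply Finset.sum_congr rfl
  intro x _
  simp only [Fin.valEmbedding_apply]
  congr 1
  have : (x = a ∨ x = b) ↔ ((x:ℕ) = a.val ∨ (x:ℕ) = b.val) := by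
    rw [Fin.ext_iff, Fin.ext_iff]
  simp only [this]


def vand {k : ℕ} (v : Fin k → ℚ) : ℚ := ∏ i, ∏ j ∈ Ioi i, (v j - v i)

lemma det_poly_vandermonde {k : ℕ} (P : Fin k → Polynomial ℚ)
    (hdeg : ∀ j, (P j).natDegree ≤ (j:ℕ)) (v : Fin k → ℚ) :
    Matrix.det (Matrix.of fun i j => (P j).eval (v i))
      = (∏ j, (P j).coeff (j:ℕ)) * vand v := by
  have hM : (Matrix.of fun i j => (P j).eval (v i))
      = (Matrix.vandermonde v) * (Matrix.of fun (l j : Fin k) => (P j).coeff (l:ℕ)) := by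
    ext i j
    simp only [Matrix.mul_apply, Matrix.of_apply, Matrix.vandermonde_apply]
    rw [Polynomial.eval_eq_sum_range' (lt_of_le_of_lt (hdeg j) j.isLt) (v i)]
    rw [Finset.sum_range fun l => (P j).coeff l * v i ^ l]
    apply Finset.sum_congr rfl
    intro l _
    ring
  rw [hM, Matrix.det_mul, Matrix.det_vandermonde]
  have htri : (Matrix.of fun (l j : Fin k) => (P j).coeff (l:ℕ)).BlockTriangular id := by
    intro l j h
    simp only [Matrix.of_apply]
    exact Polynomial.coeff_eq_zero_of_natDegree_lt (lt_of_le_of_lt (hdeg j) h)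
  rw [Matrix.det_of_upperTriangular htri]
  rw [mul_comm]
  rfl




lemma det_diff_eq (k : ℕ) (t : Fin (k+1) → ℚ) :
    (k.factorial : ℚ) * Matrix.det (Matrix.of fun (i j : Fin k) =>
        (QQ j).eval (t i.succ) - (QQ j).eval (t i.castSucc)) = vand t := by
  classical
  set P : Fin (k+1) → Polynomial ℚ := Fin.cases 1 (fun j : Fin k => QQ (j:ℕ)) with hP
  have hP0 : P 0 = 1 := rfl
  have hPs : ∀ j : Fin k, P j.succ = QQ j := fun j => rfl
  set M : Matrix (Fin (k+1)) (Fin (k+1)) ℚ := Matrix.of fun i j => (P j).eval (t i) with hM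
  have hMapp : ∀ i j, M i j = (P j).eval (t i) := fun i j => rfl
  have hdetM : M.det = (∏ j : Fin k, (1/((j:ℚ)+1))) * vand t := by
    rw [hM, det_poly_vandermonde]
    · congr 1
      rw [Fin.prod_univ_succ, hP0]
      have h1 : (1:ℚ[X]).coeff (((0:Fin (k+1)):ℕ)) = 1 := by simp
      rw [h1, one_mul]
      apply Finset.prod_congr rfl
      intro j _
      rw [hPs j]
      simp only [Fin.val_succ]
      rw [QQ_coeff_top (j:ℕ)]
    · intro j
      induction j using Fin.cases with
      | zero => simp [hP0]
      | succ j => rw [hPs j]; simpa using QQ_natDegree_le (j:ℕ)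
  set U : Matrix (Fin (k+1)) (Fin (k+1)) ℚ :=
    Matrix.of fun i l => (if l = i then (1:ℚ) else 0) -
      (if (l:ℕ)+1 = (i:ℕ) then 1 else 0) with hU
  have hdetU : U.det = 1 := by
    rw [Matrix.det_of_lowerTriangular]
    · apply Finset.prod_eq_one; intro i _
      have h2 : ¬ ((i:ℕ)+1 = (i:ℕ)) := by omega
      simp [hU, h2]
    · intro i l h
      simp only [OrderDual.toDual_lt_toDual] at h
      have h1 : ¬ (l = i) := ne_of_gt h
      have h2 : ¬ ((l:ℕ)+1 = (i:ℕ)) := by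
        have := (Fin.lt_def).1 h; omega
      simp [hU, h1, h2]
  have key : ∀ (i : Fin (k+1)) (j : Fin (k+1)), (U * M) i j
      = M i j - ∑ l : Fin (k+1), (if (l:ℕ)+1 = (i:ℕ) then M l j else 0) := by
    intro i j
    rw [Matrix.mul_apply]
    have : ∀ l : Fin (k+1), U i l * M l j
        = (if l = i then M l j else 0) - (if (l:ℕ)+1 = (i:ℕ) then M l j else 0) := by
      intro l
      simp only [hU, Matrix.of_apply]
      by_cases h1 : l = i <;> by_cases h2 : (l:ℕ)+1 = (i:ℕ) <;> simp [h1, h2]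
    rw [Finset.sum_congr rfl (fun l _ => this l), Finset.sum_sub_distrib,
      Finset.sum_ite_eq' univ i (fun l => M l j), if_pos (Finset.mem_univ i)]
  have hrow0 : ∀ j, (U * M) 0 j = M 0 j := by
    intro j
    rw [key]
    have : ∀ l : Fin (k+1), (if (l:ℕ)+1 = ((0:Fin (k+1)):ℕ) then M l j else 0) = 0 := by
      intro l
      have : ¬ ((l:ℕ)+1 = ((0:Fin (k+1)):ℕ)) := by simp
      simp [this]
    rw [Finset.sum_congr rfl (fun l _ => this l)]
    simp
  have hrowS : ∀ (m : Fin k) (j : Fin (k+1)), (U * M) m.succ j = M m.succ j - M m.castSucc j := by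
    intro m j
    rw [key]
    congr 1
    have : ∀ l : Fin (k+1), (if (l:ℕ)+1 = ((m.succ:Fin (k+1)):ℕ) then M l j else 0)
        = (if l = m.castSucc then M l j else 0) := by
      intro l
      have hiff : ((l:ℕ)+1 = ((m.succ:Fin (k+1)):ℕ)) ↔ l = m.castSucc := by
        rw [Fin.ext_iff]
        simp only [Fin.coe_castSucc, Fin.val_succ]
        omega
      simp only [hiff]
    rw [Finset.sum_congr rfl (fun l _ => this l),
      Finset.sum_ite_eq' univ m.castSucc (fun l => M l j), if_pos (Finset.mem_univ _)]
  have hexp : (U * M).det = Matrix.det (Matrix.of fun (i j : Fin k) =>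
      (QQ j).eval (t i.succ) - (QQ j).eval (t i.castSucc)) := by
    rw [Matrix.det_succ_column_zero]
    rw [Fintype.sum_eq_single 0]
    · rw [hrow0]
      have h00 : M 0 0 = 1 := by rw [hMapp, hP0]; simp
      rw [h00]
      simp only [Fin.val_zero, pow_zero, one_mul]
      congr 1
      ext i j
      simp only [Matrix.submatrix_apply, Fin.succAbove_zero, Matrix.of_apply]
      rw [hrowS, hMapp, hMapp, hPs]
    · intro b hb
      induction b using Fin.cases with
      | zero => exact absurd rfl hb
      | succ m =>
        rw [hrowS]
        have h1 : M m.succ 0 = 1 := by rw [hMapp, hP0]; simp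
        have h2 : M m.castSucc 0 = 1 := by rw [hMapp, hP0]; simp
        rw [h1, h2]
        ring
  have : (U * M).det = M.det := by rw [Matrix.det_mul, hdetU, one_mul]
  rw [← hexp, this, hdetM]
  have hfac : (∏ j : Fin k, (1/((j:ℚ)+1))) * (k.factorial : ℚ) = 1 := by
    have : (k.factorial : ℚ) = ∏ j : Fin k, ((j:ℚ)+1) := by
      rw [← Finset.prod_range_add_one_eq_factorial k]
      push_cast
      rw [Fin.prod_univ_eq_prod_range (fun j => ((j:ℚ)+1)) k]
    rw [this, ← Finset.prod_mul_distrib]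
    apply Finset.prod_eq_one
    intro j _
    have : ((j:ℚ)+1) ≠ 0 := by positivity
    field_simp
  calc (k.factorial : ℚ) * ((∏ j : Fin k, (1/((j:ℚ)+1))) * vand t)
      = ((∏ j : Fin k, (1/((j:ℚ)+1))) * (k.factorial : ℚ)) * vand t := by ring
    _ = vand t := by rw [hfac, one_mul]



def itl {n : ℕ} (S T : Finset (Fin n)) : Prop :=
  ∀ m, (T ∩ Iic m).card = (S ∩ Iic m).card ∨ (T ∩ Iic m).card = (S ∩ Iic m).card + 1

instance {S T : Finset (Fin n)} : Decidable (itl S T) := by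
  unfold itl; infer_instance

lemma fin_card_filter_le {k : ℕ} (i : Fin k) :
    (univ.filter (fun i' : Fin k => i' ≤ i)).card = (i:ℕ) + 1 := by
  have h : univ.filter (fun i' : Fin k => i' ≤ i) = Iic i := by
    ext x; simp
  rw [h]
  rw [show (Iic i).card = (Finset.map Fin.valEmbedding (Iic i)).card from (Finset.card_map _).symm]
  rw [Fin.map_valEmbedding_Iic, Nat.card_Iic]

lemma fin_card_filter_lt {k : ℕ} (i : Fin k) :
    (univ.filter (fun i' : Fin k => i' < i)).card = (i:ℕ) := by
  have h : univ.filter (fun i' : Fin k => i' < i) = Iio i := by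
    ext x; simp
  rw [h]
  rw [show (Iio i).card = (Finset.map Fin.valEmbedding (Iio i)).card from (Finset.card_map _).symm]
  rw [Fin.map_valEmbedding_Iio, Nat.card_Iio]

lemma card_inter_Iic {S : Finset (Fin n)} {k : ℕ} (h : S.card = k) (m : Fin n) :
    (S ∩ Iic m).card = (univ.filter (fun i : Fin k => S.orderEmbOfFin h i ≤ m)).card := by
  have h1 : S = univ.image (S.orderEmbOfFin h) := by
    apply Finset.coe_injective
    rw [Finset.coe_image, Finset.coe_univ, Set.image_univ, range_orderEmbOfFin]
  have h2 : S ∩ Iic m = S.filter (· ≤ m) := by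
    ext x; simp [Finset.mem_inter, Finset.mem_Iic, and_comm]
  rw [h2]
  conv_lhs => rw [h1]
  rw [Finset.filter_image]
  exact Finset.card_image_of_injective _ (S.orderEmbOfFin h).injective

lemma I1 {k : ℕ} (s : Fin k → Fin n) (t : Fin (k+1) → Fin n)
    (hs : StrictMono s) (ht : StrictMono t) :
    (∀ i, t i.castSucc ≤ s i) ↔
      ∀ m, (univ.filter (fun i => s i ≤ m)).card ≤ (univ.filter (fun j => t j ≤ m)).card := by
  constructor
  · intro h m
    apply Finset.card_le_card_of_injOn Fin.castSucc
    · intro i hi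
      simp only [Finset.mem_coe, Finset.mem_filter, Finset.mem_univ, true_and] at hi ⊢
      exact le_trans (h i) hi
    · intro a _ b _ hab
      exact Fin.castSucc_injective _ hab
  · intro h i
    by_contra hc
    push_neg at hc
    have h1 : (i:ℕ) + 1 ≤ (univ.filter (fun i' => s i' ≤ s i)).card := by
      rw [← fin_card_filter_le i]
      apply Finset.card_le_card
      intro x hx
      simp only [Finset.mem_filter, Finset.mem_univ, true_and] at hx ⊢
      exact hs.monotone hx
    have h2 : (univ.filter (fun j => t j ≤ s i)).card ≤ (i:ℕ) := by
      have : (univ.filter (fun j => t j ≤ s i)) ⊆ (univ.filter (fun j => j < i.castSucc)) := by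
        intro j hj
        simp only [Finset.mem_filter, Finset.mem_univ, true_and] at hj ⊢
        exact ht.lt_iff_lt.1 (lt_of_le_of_lt hj hc)
      have := Finset.card_le_card this
      rwa [fin_card_filter_lt i.castSucc] at this
    have := h (s i)
    omega

lemma I2 {k : ℕ} (s : Fin k → Fin n) (t : Fin (k+1) → Fin n)
    (hs : StrictMono s) (ht : StrictMono t) :
    (∀ i, s i ≤ t i.succ) ↔
      ∀ m, (univ.filter (fun j => t j ≤ m)).card ≤ (univ.filter (fun i => s i ≤ m)).card + 1 := by
  constructor
  · intro h m
    have hsub : (univ.filter (fun j => t j ≤ m))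
        ⊆ insert 0 ((univ.filter (fun i => s i ≤ m)).image Fin.succ) := by
      intro j hj
      simp only [Finset.mem_filter, Finset.mem_univ, true_and] at hj
      rcases eq_or_ne j 0 with h0 | h0
      · rw [h0]; exact Finset.mem_insert_self _ _
      · obtain ⟨i, rfl⟩ := Fin.eq_succ_of_ne_zero h0
        apply Finset.mem_insert_of_mem
        apply Finset.mem_image_of_mem
        simp only [Finset.mem_filter, Finset.mem_univ, true_and]
        exact le_trans (h i) hj
    calc (univ.filter (fun j => t j ≤ m)).card
        ≤ (insert 0 ((univ.filter (fun i => s i ≤ m)).image Fin.succ)).card :=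
          Finset.card_le_card hsub
      _ ≤ ((univ.filter (fun i => s i ≤ m)).image Fin.succ).card + 1 :=
          Finset.card_insert_le _ _
      _ = (univ.filter (fun i => s i ≤ m)).card + 1 := by
          rw [Finset.card_image_of_injective _ (Fin.succ_injective _)]
  · intro h i
    by_contra hc
    push_neg at hc
    have h1 : (i:ℕ) + 2 ≤ (univ.filter (fun j => t j ≤ t i.succ)).card := by
      have : (i.succ:ℕ) + 1 = (i:ℕ) + 2 := by simp [Fin.val_succ]
      rw [← this, ← fin_card_filter_le i.succ]
      apply Finset.card_le_card
      intro x hx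
      simp only [Finset.mem_filter, Finset.mem_univ, true_and] at hx ⊢
      exact ht.monotone hx
    have h2 : (univ.filter (fun i' => s i' ≤ t i.succ)).card ≤ (i:ℕ) := by
      have : (univ.filter (fun i' => s i' ≤ t i.succ)) ⊆ (univ.filter (fun i' => i' < i)) := by
        intro i' hi'
        simp only [Finset.mem_filter, Finset.mem_univ, true_and] at hi' ⊢
        exact hs.lt_iff_lt.1 (lt_of_le_of_lt hi' hc)
      have := Finset.card_le_card this
      rwa [fin_card_filter_lt i] at this
    have := h (t i.succ)
    omega

lemma itl_iff {S T : Finset (Fin n)} {k : ℕ} (hS : S.card = k) (hT : T.card = k+1) :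
    itl S T ↔ ∀ i : Fin k,
      T.orderEmbOfFin hT i.castSucc ≤ S.orderEmbOfFin hS i
        ∧ S.orderEmbOfFin hS i ≤ T.orderEmbOfFin hT i.succ := by
  have hs : StrictMono (S.orderEmbOfFin hS) := (S.orderEmbOfFin hS).strictMono
  have ht : StrictMono (T.orderEmbOfFin hT) := (T.orderEmbOfFin hT).strictMono
  rw [forall_and]
  rw [I1 _ _ hs ht, I2 _ _ hs ht]
  unfold itl
  constructor
  · intro h
    constructor <;> intro m <;>
      [skip; skip] <;>
      · have := h m
        rw [card_inter_Iic hS m, card_inter_Iic hT m] at this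
        omega
  · intro ⟨h1, h2⟩ m
    rw [card_inter_Iic hS m, card_inter_Iic hT m]
    have := h1 m
    have := h2 m
    omega


noncomputable def dvand {n : ℕ} (S : Finset (Fin n)) : ℚ :=
  vand (fun i : Fin S.card => ((S.orderEmbOfFin rfl i : Fin n) : ℚ))

lemma dvand_eq {n : ℕ} {S : Finset (Fin n)} {k : ℕ} (h : S.card = k) :
    dvand S = vand (fun i : Fin k => ((S.orderEmbOfFin h i : Fin n) : ℚ)) := by
  subst h; rfl


variable {n : ℕ}

lemma image_orderEmbOfFin {S : Finset (Fin n)} {k : ℕ} (h : S.card = k) :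
    univ.image (S.orderEmbOfFin h) = S := by
  apply Finset.coe_injective
  rw [Finset.coe_image, Finset.coe_univ, Set.image_univ, range_orderEmbOfFin]

lemma orderEmbOfFin_image {k : ℕ} {s : Fin k → Fin n} (hs : StrictMono s)
    (h : (univ.image s).card = k) : ∀ i, (univ.image s).orderEmbOfFin h i = s i := by
  have := orderEmbOfFin_unique' h (f := OrderEmbedding.ofStrictMono s hs)
    (fun x => Finset.mem_image_of_mem s (Finset.mem_univ x))
  intro i
  rw [← this]
  rfl

lemma card_image_strictMono {k : ℕ} {s : Fin k → Fin n} (hs : StrictMono s) :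
    (univ.image s).card = k := by
  rw [Finset.card_image_of_injective _ hs.injective, Finset.card_univ, Fintype.card_fin]

lemma mem_T_iff {k : ℕ} (T : Finset (Fin n)) (hT : T.card = k+1) (i : Fin k) (x : Fin n)
    (hlo : T.orderEmbOfFin hT i.castSucc ≤ x) (hhi : x ≤ T.orderEmbOfFin hT i.succ) :
    x ∈ T ↔ (x = T.orderEmbOfFin hT i.castSucc ∨ x = T.orderEmbOfFin hT i.succ) := by
  set t := T.orderEmbOfFin hT with ht
  constructor
  · intro hx
    have : x ∈ Set.range t := by rw [range_orderEmbOfFin]; exact hx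
    obtain ⟨j, rfl⟩ := this
    have h1 : i.castSucc ≤ j := (t.le_iff_le).1 hlo
    have h2 : j ≤ i.succ := (t.le_iff_le).1 hhi
    have : j = i.castSucc ∨ j = i.succ := by
      rw [Fin.ext_iff, Fin.ext_iff]
      rw [Fin.le_def] at h1 h2
      simp only [Fin.coe_castSucc, Fin.val_succ] at h1 h2 ⊢
      omega
    rcases this with h | h <;> [left; right] <;> rw [h]
  · intro hx
    rcases hx with h | h <;> rw [h] <;> exact Finset.orderEmbOfFin_mem _ _ _

lemma starA {k : ℕ} (T : Finset (Fin n)) (hT : T.card = k+1) :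
    ∑ S ∈ univ.filter (fun S : Finset (Fin n) => S.card = k ∧ itl S T),
        (2:ℚ)^((T \ S).card) * dvand S
      = ∑ s ∈ (Fintype.piFinset (fun i : Fin k =>
            Icc (T.orderEmbOfFin hT i.castSucc) (T.orderEmbOfFin hT i.succ))).filter
            (fun s => StrictMono s),
          2 * (∏ i, (if s i = T.orderEmbOfFin hT i.castSucc
              ∨ s i = T.orderEmbOfFin hT i.succ then (1:ℚ) else 2))
            * vand (fun i => ((s i : ℕ) : ℚ)) := by
  set t := T.orderEmbOfFin hT with htdef
  apply Finset.sum_bij'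
    (i := fun S hS => fun i : Fin k => S.orderEmbOfFin (Finset.mem_filter.1 hS).2.1 i)
    (j := fun s hs => univ.image s)
  case hi =>
    intro S hS
    have hmem := Finset.mem_filter.1 hS
    have hcard : S.card = k := hmem.2.1
    have hitl : itl S T := hmem.2.2
    rw [Finset.mem_filter]
    constructor
    · rw [Fintype.mem_piFinset]
      intro i
      rw [Finset.mem_Icc]
      exact ⟨((itl_iff hcard hT).1 hitl i).1, ((itl_iff hcard hT).1 hitl i).2⟩
    · exact (S.orderEmbOfFin hcard).strictMono
  case hj =>
    intro s hs
    have hmem := Finset.mem_filter.1 hs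
    have hsm : StrictMono s := hmem.2
    have hbox := Fintype.mem_piFinset.1 hmem.1
    have hcard : (univ.image s).card = k := card_image_strictMono hsm
    rw [Finset.mem_filter]
    refine ⟨Finset.mem_univ _, hcard, ?_⟩
    rw [itl_iff hcard hT]
    intro i
    rw [orderEmbOfFin_image hsm hcard i]
    exact Finset.mem_Icc.1 (hbox i)
  case left_neg =>
    intro S hS
    exact image_orderEmbOfFin (Finset.mem_filter.1 hS).2.1
  case right_neg =>
    intro s hs
    have hsm : StrictMono s := (Finset.mem_filter.1 hs).2
    funext i
    exact orderEmbOfFin_image hsm (card_image_strictMono hsm) i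
  case h =>
    intro S hS
    have hmem := Finset.mem_filter.1 hS
    have hcard : S.card = k := hmem.2.1
    have hitl : itl S T := hmem.2.2
    set s := fun i : Fin k => S.orderEmbOfFin hcard i with hsdef
    have hbox : ∀ i, t i.castSucc ≤ s i ∧ s i ≤ t i.succ := (itl_iff hcard hT).1 hitl
    have hsm : StrictMono s := (S.orderEmbOfFin hcard).strictMono
    rw [dvand_eq hcard]
    have hST : S ∩ T = ((univ : Finset (Fin k)).filter (fun i => s i ∈ T)).image s := by
      conv_lhs => rw [← image_orderEmbOfFin hcard]
      rw [← Finset.filter_mem_eq_inter, Finset.filter_image]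
    have hm : (S ∩ T).card = ((univ : Finset (Fin k)).filter (fun i => s i ∈ T)).card := by
      rw [hST, Finset.card_image_of_injective _ hsm.injective]
    have hcount : (T \ S).card + (S ∩ T).card = k + 1 := by
      rw [Finset.inter_comm, Finset.card_sdiff_add_card_inter, hT]
    have hiff : ∀ i : Fin k, (s i = t i.castSucc ∨ s i = t i.succ) ↔ s i ∈ T := by
      intro i
      exact (mem_T_iff T hT i (s i) (hbox i).1 (hbox i).2).symm
    have hprod : (∏ i, (if s i = t i.castSucc ∨ s i = t i.succ then (1:ℚ) else 2))
        = 2 ^ ((univ : Finset (Fin k)).filter (fun i => ¬ (s i ∈ T))).card := by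
      rw [Finset.prod_congr rfl (fun i _ => if_congr (hiff i) rfl rfl)]
      rw [Finset.prod_ite]
      simp [Finset.prod_const]
    have hsplit : ((univ : Finset (Fin k)).filter (fun i => ¬ (s i ∈ T))).card
        + ((univ : Finset (Fin k)).filter (fun i => s i ∈ T)).card = k := by
      rw [add_comm, Finset.card_filter_add_card_filter_not, Finset.card_univ,
        Fintype.card_fin]
    have hkey : (2:ℚ)^((T \ S).card)
        = 2 * (∏ i, (if s i = t i.castSucc ∨ s i = t i.succ then (1:ℚ) else 2)) := by
      have hc : ((2:ℚ)^((S ∩ T).card)) ≠ 0 := pow_ne_zero _ (by norm_num)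
      apply mul_right_cancel₀ hc
      rw [hprod, ← pow_add, hcount]
      rw [mul_assoc, ← pow_add, hm, hsplit]
      rw [pow_succ]
      ring
    rw [hkey]





variable {n : ℕ}

lemma weak_mono_of_box {k : ℕ} (t : Fin (k+1) ↪o Fin n) (s : Fin k → Fin n)
    (hbox : ∀ i, s i ∈ Icc (t i.castSucc) (t i.succ)) :
    ∀ i j : Fin k, i < j → s i ≤ s j := by
  intro i j hij
  have h1 : s i ≤ t i.succ := (Finset.mem_Icc.1 (hbox i)).2
  have h2 : t j.castSucc ≤ s j := (Finset.mem_Icc.1 (hbox j)).1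
  have h3 : i.succ ≤ j.castSucc := by
    rw [Fin.le_def]
    simp only [Fin.val_succ, Fin.coe_castSucc]
    exact hij
  exact le_trans h1 (le_trans (t.monotone h3) h2)

lemma starB {k : ℕ} (T : Finset (Fin n)) (hT : T.card = k+1) :
    ∑ S ∈ univ.filter (fun S : Finset (Fin n) => S.card = k ∧ itl S T),
        (2:ℚ)^((T \ S).card) * dvand S
      = ∑ s ∈ Fintype.piFinset (fun i : Fin k =>
            Icc (T.orderEmbOfFin hT i.castSucc) (T.orderEmbOfFin hT i.succ)),
          2 * (∏ i, (if s i = T.orderEmbOfFin hT i.castSucc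
              ∨ s i = T.orderEmbOfFin hT i.succ then (1:ℚ) else 2))
            * vand (fun i => ((s i : ℕ) : ℚ)) := by
  rw [starA T hT]
  apply Finset.sum_subset (Finset.filter_subset _ _)
  intro s hs hns
  rw [Finset.mem_filter] at hns
  have hnsm : ¬ StrictMono s := fun h => hns ⟨hs, h⟩
  have hbox := Fintype.mem_piFinset.1 hs
  have hwm := weak_mono_of_box (T.orderEmbOfFin hT) s hbox
  unfold StrictMono at hnsm
  push_neg at hnsm
  obtain ⟨i, j, hij, hnij⟩ := hnsm
  have heq : s i = s j := le_antisymm (hwm i j hij) hnij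
  have hv : vand (fun i => ((s i : ℕ) : ℚ)) = 0 := by
    unfold vand
    apply Finset.prod_eq_zero (Finset.mem_univ i)
    apply Finset.prod_eq_zero (Finset.mem_Ioi.2 hij)
    simp [heq]
  rw [hv, mul_zero]

lemma star {k : ℕ} (T : Finset (Fin n)) (hT : T.card = k+1) :
    (k.factorial : ℚ) * ∑ S ∈ univ.filter (fun S : Finset (Fin n) => S.card = k ∧ itl S T),
        (2:ℚ)^((T \ S).card) * dvand S
      = 2^(k+1) * dvand T := by
  classical
  set t := T.orderEmbOfFin hT with htdef
  set u : Fin k → Fin n → ℚ :=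
    fun i x => if x = t i.castSucc ∨ x = t i.succ then (1:ℚ) else 2 with hu
  rw [starB T hT]
  -- per-term: rewrite as determinant
  have hterm : ∀ s : Fin k → Fin n,
      2 * (∏ i, u i (s i)) * vand (fun i => ((s i : ℕ) : ℚ))
        = 2 * (Matrix.detRowAlternating (R := ℚ)).toMultilinearMap
            (fun i : Fin k => fun j : Fin k => u i (s i) * (qq (j:ℕ)).eval ((s i : ℕ):ℚ)) := by
    intro s
    have h1 : (Matrix.detRowAlternating (R := ℚ)).toMultilinearMap
            (fun i : Fin k => fun j : Fin k => u i (s i) * (qq (j:ℕ)).eval ((s i : ℕ):ℚ))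
        = Matrix.det (Matrix.of fun i j : Fin k => u i (s i)
            * (qq (j:ℕ)).eval ((s i : ℕ):ℚ)) := rfl
    rw [h1]
    have h2 : Matrix.det (Matrix.of fun i j : Fin k => u i (s i)
          * (qq (j:ℕ)).eval ((s i : ℕ):ℚ))
        = (∏ i, u i (s i)) * Matrix.det (Matrix.of fun i j : Fin k =>
            (qq (j:ℕ)).eval ((s i : ℕ):ℚ)) := by
      exact Matrix.det_mul_column (fun i => u i (s i)) _
    rw [h2, det_poly_vandermonde _ (fun j => qq_natDegree_le (j:ℕ))]
    have h3 : ∏ j : Fin k, (qq (j:ℕ)).coeff (j:ℕ) = 1 := by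
      apply Finset.prod_eq_one
      intro j _
      exact qq_coeff_j (j:ℕ)
    rw [h3, one_mul]
    ring
  rw [Finset.sum_congr rfl (fun s _ => hterm s)]
  rw [← Finset.mul_sum]
  have hML := (Matrix.detRowAlternating (R := ℚ) (n := Fin k)).toMultilinearMap.map_sum_finset
    (g := fun (i : Fin k) (x : Fin n) => fun j : Fin k => u i x * (qq (j:ℕ)).eval ((x:ℕ):ℚ))
    (A := fun i : Fin k => Icc (t i.castSucc) (t i.succ))
  beta_reduce at hML
  rw [← hML]
  -- now compute the inner determinant
  have hcol : (Matrix.detRowAlternating (R := ℚ)).toMultilinearMap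
      (fun i : Fin k => ∑ x ∈ Icc (t i.castSucc) (t i.succ),
        fun j : Fin k => u i x * (qq (j:ℕ)).eval ((x : ℕ):ℚ))
      = Matrix.det (Matrix.of fun i j : Fin k =>
          2 * ((QQ (j:ℕ)).eval ((t i.succ : ℕ):ℚ) - (QQ (j:ℕ)).eval ((t i.castSucc : ℕ):ℚ))) := by
    have : (fun i : Fin k => ∑ x ∈ Icc (t i.castSucc) (t i.succ),
        fun j : Fin k => u i x * (qq (j:ℕ)).eval ((x : ℕ):ℚ))
        = fun i : Fin k => fun j : Fin k =>
          2 * ((QQ (j:ℕ)).eval ((t i.succ : ℕ):ℚ) - (QQ (j:ℕ)).eval ((t i.castSucc : ℕ):ℚ)) := by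
      funext i j
      rw [Finset.sum_apply]
      have hab : t i.castSucc < t i.succ := t.strictMono (Fin.castSucc_lt_succ (i := i))
      rw [← tele_fin (j:ℕ) _ _ hab]
    rw [this]
    rfl
  rw [hcol]
  have h4 : Matrix.det (Matrix.of fun i j : Fin k =>
        2 * ((QQ (j:ℕ)).eval ((t i.succ : ℕ):ℚ) - (QQ (j:ℕ)).eval ((t i.castSucc : ℕ):ℚ)))
      = 2^k * Matrix.det (Matrix.of fun i j : Fin k =>
          ((QQ (j:ℕ)).eval ((t i.succ : ℕ):ℚ) - (QQ (j:ℕ)).eval ((t i.castSucc : ℕ):ℚ))) := by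
    have := Matrix.det_mul_column (fun _ : Fin k => (2:ℚ))
      (Matrix.of fun i j : Fin k =>
        ((QQ (j:ℕ)).eval ((t i.succ : ℕ):ℚ) - (QQ (j:ℕ)).eval ((t i.castSucc : ℕ):ℚ)))
    simp only [Finset.prod_const, Finset.card_univ, Fintype.card_fin] at this
    exact this
  rw [h4]
  have h5 := det_diff_eq k (fun i : Fin (k+1) => ((t i : Fin n) : ℚ))
  rw [dvand_eq hT]
  calc (k.factorial : ℚ) * (2 * (2^k * Matrix.det (Matrix.of fun i j : Fin k =>
        ((QQ (j:ℕ)).eval ((t i.succ : ℕ):ℚ) - (QQ (j:ℕ)).eval ((t i.castSucc : ℕ):ℚ)))))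
      = 2^(k+1) * ((k.factorial : ℚ) * Matrix.det (Matrix.of fun i j : Fin k =>
        ((QQ (j:ℕ)).eval ((t i.succ : ℕ):ℚ) - (QQ (j:ℕ)).eval ((t i.castSucc : ℕ):ℚ)))) := by
        rw [pow_succ]; ring
    _ = 2^(k+1) * vand (fun i : Fin (k+1) => ((t i : Fin n) : ℚ)) := by rw [h5]



def W {n : ℕ} : ℕ → Finset (Fin n) → ℕ
  | 0, S => if S = ∅ then 1 else 0
  | (k+1), T => ∑ S ∈ univ.filter (fun S : Finset (Fin n) => S.card = k ∧ itl S T),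
      2^((T \ S).card) * W k S

def cfac (k : ℕ) : ℕ := ∏ j ∈ range k, j.factorial

def ek (k : ℕ) : ℕ := ∑ i ∈ range k, (i+1)

lemma W_eval {n : ℕ} : ∀ (k : ℕ) (S : Finset (Fin n)), S.card = k →
    (cfac k : ℚ) * W k S = 2^(ek k) * dvand S := by
  intro k
  induction k with
  | zero =>
    intro S hS
    have : S = ∅ := Finset.card_eq_zero.1 hS
    subst this
    simp [W, cfac, ek, dvand, vand]
    symm
    apply Finset.prod_eq_one
    intro i _
    exact absurd i.isLt (by simp)
  | succ k ih =>
    intro T hT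
    have hW : (W (k+1) T : ℚ)
        = ∑ S ∈ univ.filter (fun S : Finset (Fin n) => S.card = k ∧ itl S T),
            (2:ℚ)^((T \ S).card) * (W k S : ℚ) := by
      rw [W]
      push_cast
      rfl
    have hsum : ∑ S ∈ univ.filter (fun S : Finset (Fin n) => S.card = k ∧ itl S T),
          (2:ℚ)^((T \ S).card) * ((cfac k : ℚ) * W k S)
        = 2^(ek k) * ∑ S ∈ univ.filter (fun S : Finset (Fin n) => S.card = k ∧ itl S T),
            (2:ℚ)^((T \ S).card) * dvand S := by
      rw [Finset.mul_sum]
      apply Finset.sum_congr rfl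
      intro S hS
      rw [ih S (Finset.mem_filter.1 hS).2.1]
      ring
    have hstar := star T hT
    have hcfac : (cfac (k+1) : ℚ) = (cfac k : ℚ) * (k.factorial : ℚ) := by
      unfold cfac
      rw [Finset.prod_range_succ]
      push_cast
      ring
    have hek : ek (k+1) = ek k + (k+1) := by
      unfold ek
      rw [Finset.sum_range_succ]
    calc (cfac (k+1) : ℚ) * W (k+1) T
        = (k.factorial : ℚ) * ((cfac k : ℚ) * (W (k+1) T : ℚ)) := by rw [hcfac]; ring
      _ = (k.factorial : ℚ) * ((cfac k : ℚ) *
            ∑ S ∈ univ.filter (fun S : Finset (Fin n) => S.card = k ∧ itl S T),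
              (2:ℚ)^((T \ S).card) * (W k S : ℚ)) := by rw [hW]
      _ = (k.factorial : ℚ) *
            ∑ S ∈ univ.filter (fun S : Finset (Fin n) => S.card = k ∧ itl S T),
              (2:ℚ)^((T \ S).card) * ((cfac k : ℚ) * W k S) := by
            rw [Finset.mul_sum]
            congr 1
            apply Finset.sum_congr rfl
            intro S _
            ring
      _ = (k.factorial : ℚ) * (2^(ek k) *
            ∑ S ∈ univ.filter (fun S : Finset (Fin n) => S.card = k ∧ itl S T),
              (2:ℚ)^((T \ S).card) * dvand S) := by rw [hsum]
      _ = 2^(ek k) * ((k.factorial : ℚ) *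
            ∑ S ∈ univ.filter (fun S : Finset (Fin n) => S.card = k ∧ itl S T),
              (2:ℚ)^((T \ S).card) * dvand S) := by ring
      _ = 2^(ek k) * (2^(k+1) * dvand T) := by rw [hstar]
      _ = 2^(ek (k+1)) * dvand T := by rw [hek, pow_add]; ring


def wt {n : ℕ} (k : ℕ) (c : Fin (k+1) → Finset (Fin n)) : ℕ :=
  ∏ i : Fin k, 2^((c i.succ \ c i.castSucc).card)

def PC {n : ℕ} (k : ℕ) (T : Finset (Fin n)) : Finset (Fin (k+1) → Finset (Fin n)) :=
  univ.filter (fun c => (∀ j, (c j).card = (j:ℕ))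
    ∧ (∀ i : Fin k, itl (c i.castSucc) (c i.succ)) ∧ c (Fin.last k) = T)

lemma PC_sum {n : ℕ} : ∀ (k : ℕ) (T : Finset (Fin n)), T.card = k →
    ∑ c ∈ PC k T, wt k c = W k T := by
  intro k
  induction k with
  | zero =>
    intro T hT
    have hT0 : T = ∅ := Finset.card_eq_zero.1 hT
    subst hT0
    have hPC : PC (n := n) 0 ∅ = {fun _ => ∅} := by
      ext c
      simp only [PC, Finset.mem_filter, Finset.mem_univ, true_and, Finset.mem_singleton]
      constructor
      · intro ⟨h1, _, h3⟩
        funext j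
        have : j = Fin.last 0 := Fin.ext (by omega)
        rw [this, h3]
      · intro h
        subst h
        refine ⟨fun j => by simp, fun i => i.elim0, rfl⟩
    rw [hPC]
    simp [wt, W]
  | succ k ih =>
    intro T hT
    have hW : W (k+1) T = ∑ S ∈ univ.filter (fun S : Finset (Fin n) => S.card = k ∧ itl S T),
        2^((T \ S).card) * W k S := rfl
    rw [hW]
    have hinner : ∀ S ∈ univ.filter (fun S : Finset (Fin n) => S.card = k ∧ itl S T),
        2^((T \ S).card) * W k S = ∑ c' ∈ PC k S, 2^((T \ S).card) * wt k c' := by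
      intro S hS
      rw [← Finset.mul_sum, ih S (Finset.mem_filter.1 hS).2.1]
    rw [Finset.sum_congr rfl hinner]
    rw [← Finset.sum_sigma (univ.filter (fun S : Finset (Fin n) => S.card = k ∧ itl S T))
      (fun S => PC k S) (fun p => 2^((T \ p.1).card) * wt k p.2)]
    apply Finset.sum_bij'
      (i := fun c _ => (⟨c ((Fin.last k).castSucc), fun j : Fin (k+1) => c j.castSucc⟩ :
        Σ _ : Finset (Fin n), (Fin (k+1) → Finset (Fin n))))
      (j := fun p _ => Fin.snoc p.2 T)
    case hi =>
      intro c hc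
      rw [PC, Finset.mem_filter] at hc
      obtain ⟨-, hcard, hitl, hlast⟩ := hc
      rw [Finset.mem_sigma, Finset.mem_filter]
      refine ⟨⟨Finset.mem_univ _, ?_, ?_⟩, ?_⟩
      · rw [hcard]; rfl
      · have := hitl (Fin.last k)
        rwa [Fin.succ_last, hlast] at this
      · rw [PC, Finset.mem_filter]
        refine ⟨Finset.mem_univ _, ?_, ?_, rfl⟩
        · intro j
          rw [hcard]; rfl
        · intro i
          have := hitl i.castSucc
          rwa [Fin.succ_castSucc] at this
    case hj =>
      rintro ⟨S, c'⟩ hp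
      rw [Finset.mem_sigma] at hp
      obtain ⟨hS, hc'⟩ := hp
      rw [Finset.mem_filter] at hS
      obtain ⟨-, hScard, hitl⟩ := hS
      rw [PC, Finset.mem_filter] at hc'
      obtain ⟨-, hcard, hitl', hlast⟩ := hc'
      rw [PC, Finset.mem_filter]
      refine ⟨Finset.mem_univ _, ?_, ?_, ?_⟩
      · intro j
        induction j using Fin.lastCases with
        | last => rw [Fin.snoc_last, hT]; rfl
        | cast j => rw [Fin.snoc_castSucc, hcard]; rfl
      · intro i
        induction i using Fin.lastCases with
        | last =>
          rw [Fin.succ_last, Fin.snoc_last, Fin.snoc_castSucc, hlast]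
          exact hitl
        | cast i =>
          rw [Fin.succ_castSucc, Fin.snoc_castSucc, Fin.snoc_castSucc]
          exact hitl' i
      · rw [Fin.snoc_last]
    case left_neg =>
      intro c hc
      rw [PC, Finset.mem_filter] at hc
      obtain ⟨-, hcard, hitl, hlast⟩ := hc
      funext j
      induction j using Fin.lastCases with
      | last => rw [Fin.snoc_last, hlast]
      | cast j => rw [Fin.snoc_castSucc]
    case right_neg =>
      rintro ⟨S, c'⟩ hp
      rw [Finset.mem_sigma] at hp
      obtain ⟨hS, hc'⟩ := hp
      rw [PC, Finset.mem_filter] at hc'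
      obtain ⟨-, hcard, hitl', hlast⟩ := hc'
      have h1 : Fin.snoc (α := fun _ => Finset (Fin n)) c' T ((Fin.last k).castSucc) = S := by
        rw [Fin.snoc_castSucc]; exact hlast
      have h2 : (fun j : Fin (k+1) => Fin.snoc (α := fun _ => Finset (Fin n)) c' T j.castSucc)
          = c' := by
        funext j
        rw [Fin.snoc_castSucc]
      exact Sigma.ext h1 (heq_of_eq (by rw [h2]))
    case h =>
      intro c hc
      rw [PC, Finset.mem_filter] at hc
      obtain ⟨-, hcard, hitl, hlast⟩ := hc
      show wt (k+1) c = 2^((T \ c ((Fin.last k).castSucc)).card)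
        * wt k (fun j : Fin (k+1) => c j.castSucc)
      unfold wt
      rw [Fin.prod_univ_castSucc
        (fun i : Fin (k+1) => 2^((c i.succ \ c i.castSucc).card))]
      rw [Fin.succ_last, hlast]
      rw [mul_comm]
      congr 1


variable {n : ℕ}

def PS (A : Matrix (Fin n) (Fin n) ℤ) (j : Fin (n+1)) (col : Fin n) : ℤ :=
  ∑ x ∈ univ.filter (fun x : Fin n => (x:ℕ) < (j:ℕ)), A x col

def Phi (A : Matrix (Fin n) (Fin n) ℤ) : Fin (n+1) → Finset (Fin n) :=
  fun j => univ.filter (fun col => PS A j col = 1)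

def Psi (c : Fin (n+1) → Finset (Fin n)) : Matrix (Fin n) (Fin n) ℤ :=
  fun i col => (if col ∈ c i.succ then 1 else 0) - (if col ∈ c i.castSucc then 1 else 0)

lemma filt_zero : univ.filter (fun x : Fin n => (x:ℕ) < ((0 : Fin (n+1)):ℕ)) = ∅ := by
  ext x; simp

lemma filt_succ (i : Fin n) :
    univ.filter (fun x : Fin n => (x:ℕ) < ((i.succ : Fin (n+1)):ℕ)) = Iic i := by
  ext x
  simp only [Finset.mem_filter, Finset.mem_univ, true_and, Finset.mem_Iic, Fin.val_succ]
  rw [Fin.le_def]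
  omega

lemma filt_last : univ.filter (fun x : Fin n => (x:ℕ) < ((Fin.last n : Fin (n+1)):ℕ)) = univ := by
  ext x; simp [Fin.val_last, x.isLt]

lemma sum_Iic_eq_PS (A : Matrix (Fin n) (Fin n) ℤ) (m : Fin n) (col : Fin n) :
    ∑ x ∈ Iic m, A x col = PS A m.succ col := by
  rw [PS, filt_succ]

lemma PS_zero (A : Matrix (Fin n) (Fin n) ℤ) (col : Fin n) : PS A 0 col = 0 := by
  rw [PS, filt_zero, Finset.sum_empty]

lemma PS_succ (A : Matrix (Fin n) (Fin n) ℤ) (i : Fin n) (col : Fin n) :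
    PS A i.succ col = PS A i.castSucc col + A i col := by
  rw [PS, PS]
  have h : univ.filter (fun x : Fin n => (x:ℕ) < ((i.succ : Fin (n+1)):ℕ))
      = insert i (univ.filter (fun x : Fin n => (x:ℕ) < ((i.castSucc : Fin (n+1)):ℕ))) := by
    ext x
    simp only [Finset.mem_filter, Finset.mem_univ, true_and, Finset.mem_insert,
      Fin.val_succ, Fin.coe_castSucc]
    rw [Fin.ext_iff]
    omega
  rw [h, Finset.sum_insert (by simp)]
  ring

lemma PS_mem (A : Matrix (Fin n) (Fin n) ℤ) (hA : IsASM A) (j : Fin (n+1)) (col : Fin n) :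
    PS A j col = 0 ∨ PS A j col = 1 := by
  induction j using Fin.cases with
  | zero => left; exact PS_zero A col
  | succ i =>
    rw [← sum_Iic_eq_PS]
    exact hA.2.2.1 col i

lemma Phi_ind (A : Matrix (Fin n) (Fin n) ℤ) (hA : IsASM A) (j : Fin (n+1)) (col : Fin n) :
    (if col ∈ Phi A j then (1:ℤ) else 0) = PS A j col := by
  by_cases h : col ∈ Phi A j
  · rw [if_pos h]
    exact ((Finset.mem_filter.1 h).2).symm
  · rw [if_neg h]
    rcases PS_mem A hA j col with h0 | h1
    · exact h0.symm
    · exact absurd (show col ∈ Phi A j from Finset.mem_filter.2 ⟨Finset.mem_univ col, h1⟩) h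

lemma card_filt (j : Fin (n+1)) :
    (univ.filter (fun x : Fin n => (x:ℕ) < (j:ℕ))).card = (j:ℕ) := by
  induction j using Fin.cases with
  | zero => rw [filt_zero]; simp
  | succ i =>
    rw [filt_succ]
    rw [show (Iic i).card = (Finset.map Fin.valEmbedding (Iic i)).card
      from (Finset.card_map _).symm]
    rw [Fin.map_valEmbedding_Iic, Nat.card_Iic, Fin.val_succ]

lemma ind_sum (S : Finset (Fin n)) (D : Finset (Fin n)) :
    ∑ x ∈ D, (if x ∈ S then (1:ℤ) else 0) = ((S ∩ D).card : ℤ) := by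
  rw [Finset.sum_boole]
  congr 1
  rw [Finset.filter_mem_eq_inter, Finset.inter_comm]

lemma card_Phi (A : Matrix (Fin n) (Fin n) ℤ) (hA : IsASM A) (j : Fin (n+1)) :
    (Phi A j).card = (j:ℕ) := by
  have h1 : ((Phi A j).card : ℤ) = ((j:ℕ) : ℤ) := by
    have h2 : ((Phi A j ∩ univ).card : ℤ) = ∑ col, PS A j col := by
      rw [← ind_sum]
      exact Finset.sum_congr rfl (fun col _ => Phi_ind A hA j col)
    rw [Finset.inter_univ] at h2
    rw [h2]
    unfold PS
    rw [Finset.sum_comm]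
    have h3 : ∀ x ∈ univ.filter (fun x : Fin n => (x:ℕ) < (j:ℕ)),
        ∑ col, A x col = 1 := fun x _ => hA.2.2.2.1 x
    rw [Finset.sum_congr rfl h3, Finset.sum_const, card_filt]
    simp
  exact_mod_cast h1

lemma card_inter_PS (A : Matrix (Fin n) (Fin n) ℤ) (hA : IsASM A) (j : Fin (n+1)) (m : Fin n) :
    ((Phi A j ∩ Iic m).card : ℤ) = ∑ col ∈ Iic m, PS A j col := by
  rw [← ind_sum]
  exact Finset.sum_congr rfl (fun col _ => Phi_ind A hA j col)

lemma itl_Phi (A : Matrix (Fin n) (Fin n) ℤ) (hA : IsASM A) (i : Fin n) :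
    itl (Phi A i.castSucc) (Phi A i.succ) := by
  intro m
  have h1 := card_inter_PS A hA i.succ m
  have h2 := card_inter_PS A hA i.castSucc m
  have h3 : ∑ col ∈ Iic m, PS A i.succ col
      = (∑ col ∈ Iic m, PS A i.castSucc col) + ∑ col ∈ Iic m, A i col := by
    rw [← Finset.sum_add_distrib]
    exact Finset.sum_congr rfl (fun col _ => PS_succ A i col)
  have h4 := hA.2.1 i m
  rcases h4 with h4 | h4 <;> [left; right] <;> rw [h4] at h3 <;> omega

lemma Phi_last (A : Matrix (Fin n) (Fin n) ℤ) (hA : IsASM A) : Phi A (Fin.last n) = univ := by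
  apply Finset.eq_univ_of_forall
  intro col
  rw [Phi, Finset.mem_filter]
  refine ⟨Finset.mem_univ _, ?_⟩
  rw [PS, filt_last]
  exact hA.2.2.2.2 col

lemma Phi_mem_PC (A : Matrix (Fin n) (Fin n) ℤ) (hA : IsASM A) : Phi A ∈ PC n univ := by
  rw [PC, Finset.mem_filter]
  exact ⟨Finset.mem_univ _, card_Phi A hA, itl_Phi A hA, Phi_last A hA⟩

lemma PS_Psi (c : Fin (n+1) → Finset (Fin n)) (h0 : c 0 = ∅) (j : Fin (n+1)) (col : Fin n) :
    PS (Psi c) j col = if col ∈ c j then 1 else 0 := by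
  induction j using Fin.induction with
  | zero => rw [PS_zero, h0]; simp
  | succ i ih =>
    rw [PS_succ, ih]
    unfold Psi
    ring

lemma sum_univ_eq_PS_last (A : Matrix (Fin n) (Fin n) ℤ) (col : Fin n) :
    ∑ x, A x col = PS A (Fin.last n) col := by
  rw [PS, filt_last]

lemma IsASM_Psi (c : Fin (n+1) → Finset (Fin n)) (hc : c ∈ PC n univ) : IsASM (Psi c) := by
  rw [PC, Finset.mem_filter] at hc
  obtain ⟨-, hcard, hitl, hlast⟩ := hc
  have h0 : c 0 = ∅ := Finset.card_eq_zero.1 (by rw [hcard 0]; rfl)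
  refine ⟨?_, ?_, ?_, ?_, ?_⟩
  · intro i col
    unfold Psi
    by_cases h1 : col ∈ c i.succ <;> by_cases h2 : col ∈ c i.castSucc <;>
      simp [h1, h2]
  · intro i m
    have hsum : ∑ x ∈ Iic m, Psi c i x
        = ((c i.succ ∩ Iic m).card : ℤ) - ((c i.castSucc ∩ Iic m).card : ℤ) := by
      unfold Psi
      rw [Finset.sum_sub_distrib, ind_sum, ind_sum]
    rw [hsum]
    have := hitl i m
    omega
  · intro col m
    rw [sum_Iic_eq_PS, PS_Psi c h0]
    by_cases h : col ∈ c m.succ <;> simp [h]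
  · intro i
    have hsum : ∑ x, Psi c i x
        = ((c i.succ ∩ univ).card : ℤ) - ((c i.castSucc ∩ univ).card : ℤ) := by
      unfold Psi
      rw [Finset.sum_sub_distrib, ind_sum, ind_sum]
    rw [hsum, Finset.inter_univ, Finset.inter_univ, hcard, hcard]
    simp [Fin.val_succ]
  · intro col
    rw [sum_univ_eq_PS_last, PS_Psi c h0, hlast]
    simp

lemma Phi_Psi (c : Fin (n+1) → Finset (Fin n)) (hc : c ∈ PC n univ) : Phi (Psi c) = c := by
  have hc' := hc
  rw [PC, Finset.mem_filter] at hc'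
  obtain ⟨-, hcard, hitl, hlast⟩ := hc'
  have h0 : c 0 = ∅ := Finset.card_eq_zero.1 (by rw [hcard 0]; rfl)
  funext j
  ext col
  rw [Phi, Finset.mem_filter, PS_Psi c h0]
  by_cases h : col ∈ c j <;> simp [h]

lemma Psi_Phi (A : Matrix (Fin n) (Fin n) ℤ) (hA : IsASM A) : Psi (Phi A) = A := by
  funext i col
  unfold Psi
  rw [Phi_ind A hA, Phi_ind A hA, PS_succ]
  ring

lemma pow_Nplus (A : Matrix (Fin n) (Fin n) ℤ) (hA : IsASM A) :
    2 ^ Nplus A = wt n (Phi A) := by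
  have step1 : ∀ (i : Fin n) (col : Fin n),
      A i col = 1 ↔ col ∈ (Phi A i.succ \ Phi A i.castSucc) := by
    intro i col
    have hs := PS_succ A i col
    have h1 := PS_mem A hA i.succ col
    have h2 := PS_mem A hA i.castSucc col
    rw [Finset.mem_sdiff, Phi, Phi, Finset.mem_filter, Finset.mem_filter]
    simp only [Finset.mem_univ, true_and]
    constructor
    · intro h
      constructor
      · omega
      · intro hmem
        omega
    · intro ⟨ha, hb⟩
      have : ¬ (PS A i.castSucc col = 1) := hb
      omega
  have step2 : Nplus A = ∑ i : Fin n, ((Phi A i.succ) \ (Phi A i.castSucc)).card := by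
    rw [Nplus, Finset.card_filter]
    rw [Fintype.sum_prod_type]
    apply Finset.sum_congr rfl
    intro i _
    rw [← Finset.card_filter]
    congr 1
    ext col
    rw [Finset.mem_filter]
    simp only [Finset.mem_univ, true_and]
    exact step1 i col
  rw [step2, ← Finset.prod_pow_eq_pow_sum]
  rfl

lemma asm_set_eq : {A : Matrix (Fin n) (Fin n) ℤ | IsASM A}
    = ↑((PC (n := n) n univ).image Psi) := by
  ext A
  simp only [Set.mem_setOf_eq, Finset.coe_image, Set.mem_image, Finset.mem_coe]
  constructor
  · intro hA
    exact ⟨Phi A, Phi_mem_PC A hA, Psi_Phi A hA⟩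
  · rintro ⟨c, hc, rfl⟩
    exact IsASM_Psi c hc

lemma finsum_asm_eq :
    (∑ᶠ A ∈ {A : Matrix (Fin n) (Fin n) ℤ | IsASM A}, 2 ^ Nplus A)
      = ∑ c ∈ PC (n := n) n univ, wt n c := by
  rw [asm_set_eq, finsum_mem_coe_finset]
  rw [Finset.sum_image (f := fun A => 2 ^ Nplus A) (g := Psi) ?hinj]
  case hinj =>
    intro c hc c' hc' heq
    rw [← Phi_Psi c hc, ← Phi_Psi c' hc', heq]
  apply Finset.sum_congr rfl
  intro c hc
  rw [pow_Nplus _ (IsASM_Psi c hc), Phi_Psi c hc]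


lemma dvand_univ {n : ℕ} : dvand (univ : Finset (Fin n)) = (cfac n : ℚ) := by
  have hcard : (univ : Finset (Fin n)).card = n := by simp
  rw [dvand_eq hcard]
  have hemb : ∀ i : Fin n, (univ : Finset (Fin n)).orderEmbOfFin hcard i = i := by
    have h := orderEmbOfFin_unique' (s := (univ : Finset (Fin n))) hcard
      (f := OrderEmbedding.ofStrictMono (fun i => i) strictMono_id) (fun x => mem_univ x)
    intro i
    rw [← h]
    rfl
  have h1 : vand (fun i : Fin n => (((univ : Finset (Fin n)).orderEmbOfFin hcard i : Fin n) : ℚ))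
      = vand (fun i : Fin n => ((i : Fin n) : ℚ)) := by
    congr 1
    funext i
    rw [hemb i]
  rw [h1]
  cases n with
  | zero => simp [vand, cfac]
  | succ m =>
    have h2 := Matrix.det_vandermonde (R := ℚ) (fun i : Fin (m+1) => ((i : Fin (m+1)) : ℚ))
    have h3 := Matrix.det_vandermonde_id_eq_superFactorial (R := ℚ) m
    rw [vand, ← h2, h3]
    rw [cfac, Nat.prod_range_succ_factorial]

lemma ek_two (n : ℕ) : 2 * ek n = n * (n+1) := by
  induction n with
  | zero => rfl
  | succ m ih =>
    rw [ek, Finset.sum_range_succ, ← ek]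
    ring_nf
    ring_nf at ih
    omega

lemma ek_eq (n : ℕ) : n * (n+1) / 2 = ek n := by
  apply Nat.div_eq_of_eq_mul_left (by norm_num)
  rw [← ek_two n]
  ring

/-- For every `n ≥ 1`, `Σ_{A ∈ 𝒜ₙ} 2^{N₊(A)} = 2^{n(n+1)/2}`. -/
theorem two_enum_plus_eq_pow (n : ℕ) (hn : 1 ≤ n) :
    (∑ᶠ A ∈ {A : Matrix (Fin n) (Fin n) ℤ | IsASM A}, 2 ^ Nplus A) =
      2 ^ (n * (n + 1) / 2) := by
  have hcard : (univ : Finset (Fin n)).card = n := by simp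
  rw [finsum_asm_eq, PC_sum n univ hcard]
  have hW := W_eval n univ hcard
  rw [dvand_univ] at hW
  have hcf : (cfac n : ℚ) ≠ 0 := by
    have h1 : 0 < cfac n := Finset.prod_pos (fun j _ => Nat.factorial_pos j)
    exact_mod_cast h1.ne'
  have h2 : (W n (univ : Finset (Fin n)) : ℚ) = 2 ^ (ek n) := by
    apply mul_left_cancel₀ hcf
    rw [hW]
    ring
  have h3 : W n (univ : Finset (Fin n)) = 2 ^ (ek n) := by exact_mod_cast h2
  rw [h3, ek_eq]
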